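/- With λ defined as the limit λ(x) = lim_{k→∞} C(⌊(m+1)^k x⌋)/((m+1)^k x)^α for x > 0, we have λ((m+1)x) = λ(x) for every x > 0, and λ(n) = C(n)/n^α for every positive integer n. -/

import Mathlib

def cantorC (m : ℕ) (f : ℕ → ℕ) (n : ℕ) : ℕ :=
  Nat.ofDigits (f m + 1) ((Nat.digits (m + 1) n).map f)

noncomputable def digitD (m : ℕ) (x : ℝ) (r : ℕ) : ℕ :=
  (⌊x * (m + 1) ^ r⌋).toNat % (m + 1)

/-- The limit function `λ(x) = lim_k C(⌊(m+1)^k x⌋)/((m+1)^k x)^α`, given by its explicit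
formula `(C(⌊x⌋) + Σ_{r≥1} f(ε_r)(f(m)+1)^{-r})/x^α` where `ε_1ε_2…` are the fractional
base-`(m+1)` digits of `x`. -/
noncomputable def cantorLam (m : ℕ) (f : ℕ → ℕ) (α : ℝ) (x : ℝ) : ℝ :=
  ((cantorC m f ⌊x⌋.toNat : ℝ) +
      ∑' r : ℕ, (f (digitD m (Int.fract x) (r + 1)) : ℝ) / ((f m : ℝ) + 1) ^ (r + 1)) /
    x ^ α

lemma digitD_lt (m : ℕ) (y : ℝ) (r : ℕ) : digitD m y r < m + 1 :=
  Nat.mod_lt _ (Nat.succ_pos m)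

lemma cantorC_step (m : ℕ) (hm : 1 ≤ m) (f : ℕ → ℕ) (hf0 : f 0 = 0) (n d : ℕ) (hd : d < m + 1) :
    cantorC m f ((m + 1) * n + d) = f d + (f m + 1) * cantorC m f n := by
  rcases Nat.eq_zero_or_pos ((m + 1) * n + d) with h | h
  · rw [Nat.add_eq_zero] at h
    obtain ⟨h3, hd0⟩ := h
    have hn : n = 0 := by
      rcases Nat.mul_eq_zero.1 h3 with h' | h'
      · omega
      · exact h'
    simp [hn, hd0, cantorC, hf0]
  · unfold cantorC
    have hb : 1 < m + 1 := Nat.lt_add_of_pos_left (by omega)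
    rw [Nat.digits_def' hb h]
    have h1 : ((m + 1) * n + d) % (m + 1) = d := by
      rw [Nat.mul_add_mod]; exact Nat.mod_eq_of_lt hd
    have h2 : ((m + 1) * n + d) / (m + 1) = n := by
      rw [Nat.mul_add_div (by omega)]
      rw [Nat.div_eq_of_lt hd, Nat.add_zero]
    rw [h1, h2]
    simp [Nat.ofDigits_cons]

lemma fract_mul_eq (m : ℕ) (x : ℝ) :
    Int.fract (((m : ℝ) + 1) * x) = Int.fract (((m : ℝ) + 1) * Int.fract x) := by
  have h : ((m : ℝ) + 1) * x
      = (((m + 1 : ℤ) * ⌊x⌋ : ℤ) : ℝ) + ((m : ℝ) + 1) * Int.fract x := by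
    rw [Int.fract]; push_cast; ring
  rw [h, Int.fract_intCast_add]

lemma digitD_shift (m : ℕ) (x : ℝ) (r : ℕ) :
    digitD m (Int.fract (((m : ℝ) + 1) * x)) (r + 1) = digitD m (Int.fract x) (r + 2) := by
  rw [fract_mul_eq]
  set y := Int.fract x with hy
  have hy0 : 0 ≤ y := Int.fract_nonneg x
  set z := ((m : ℝ) + 1) * y with hz
  have hz0 : 0 ≤ z := by positivity
  have hc0 : (0 : ℤ) ≤ ⌊z⌋ := Int.floor_nonneg.2 hz0
  unfold digitD
  have key : Int.fract z * ((m : ℝ) + 1) ^ (r + 1)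
      = y * ((m : ℝ) + 1) ^ (r + 2) - ((⌊z⌋ * ((m + 1) ^ (r + 1) : ℤ) : ℤ) : ℝ) := by
    rw [Int.fract]; push_cast; ring
  have hfl : ⌊Int.fract z * ((m : ℝ) + 1) ^ (r + 1)⌋
      = ⌊y * ((m : ℝ) + 1) ^ (r + 2)⌋ - ⌊z⌋ * ((m + 1) ^ (r + 1) : ℤ) := by
    rw [key, Int.floor_sub_intCast]
  have hD0 : (0 : ℤ) ≤ ⌊Int.fract z * ((m : ℝ) + 1) ^ (r + 1)⌋ :=
    Int.floor_nonneg.2 (mul_nonneg (Int.fract_nonneg z) (by positivity))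
  rw [hfl]
  rw [hfl] at hD0
  set A := ⌊y * ((m : ℝ) + 1) ^ (r + 2)⌋ with hA
  set c := ⌊z⌋ with hc
  set K := (m + 1) ^ (r + 1) with hK
  have hKc : ((K : ℕ) : ℤ) = ((m + 1) ^ (r + 1) : ℤ) := by rw [hK]; push_cast; ring
  rw [← hKc] at hD0 ⊢
  have hcK : ((c.toNat * K : ℕ) : ℤ) = c * (K : ℤ) := by
    push_cast; rw [Int.toNat_of_nonneg hc0]
  have hnat : A.toNat = (A - c * (K : ℤ)).toNat + c.toNat * K := by omega
  rw [hnat]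
  have hK' : K = (m + 1) ^ r * (m + 1) := by rw [hK]; ring
  rw [hK', ← mul_assoc, Nat.add_mul_mod_self_right]

lemma floor_mul_toNat (m : ℕ) (x : ℝ) (hx : 0 < x) :
    (⌊((m : ℝ) + 1) * x⌋).toNat = (m + 1) * ⌊x⌋.toNat + digitD m (Int.fract x) 1 := by
  have hfx : (0:ℤ) ≤ ⌊x⌋ := Int.floor_nonneg.2 hx.le
  have h : ((m : ℝ) + 1) * x
      = (((m + 1 : ℤ) * ⌊x⌋ : ℤ) : ℝ) + ((m : ℝ) + 1) * Int.fract x := by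
    rw [Int.fract]; push_cast; ring
  rw [h, Int.floor_intCast_add]
  have hE0 : (0:ℤ) ≤ ⌊((m : ℝ) + 1) * Int.fract x⌋ :=
    Int.floor_nonneg.2 (mul_nonneg (by positivity) (Int.fract_nonneg x))
  have hE1 : ⌊((m : ℝ) + 1) * Int.fract x⌋ < (m : ℤ) + 1 := by
    apply Int.floor_lt.2
    push_cast
    have := Int.fract_lt_one x
    nlinarith [Int.fract_nonneg x]
  have hd : digitD m (Int.fract x) 1 = (⌊((m : ℝ) + 1) * Int.fract x⌋).toNat := by
    unfold digitD
    rw [pow_one, mul_comm]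
    exact Nat.mod_eq_of_lt (by omega)
  rw [hd]
  set E := ⌊((m : ℝ) + 1) * Int.fract x⌋ with hE
  set p := ⌊x⌋ with hp
  have : ((m + 1 : ℤ)) * p = ((( (m+1) * p.toNat : ℕ) : ℤ)) := by
    push_cast; rw [Int.toNat_of_nonneg hfx]
  rw [this]
  omega

lemma f_le_fm (m : ℕ) (f : ℕ → ℕ) (hf : ∀ i j, i < j → j ≤ m → f i < f j)
    (i : ℕ) (hi : i ≤ m) : f i ≤ f m := by
  rcases lt_or_eq_of_le hi with h | h
  · exact (hf i m h le_rfl).le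
  · rw [h]

lemma summable_digit (m : ℕ) (f : ℕ → ℕ) (hf : ∀ i j, i < j → j ≤ m → f i < f j)
    (hfm : m < f m) (y : ℝ) :
    Summable (fun r : ℕ => (f (digitD m y (r + 1)) : ℝ) / ((f m : ℝ) + 1) ^ (r + 1)) := by
  have hF1 : (1 : ℝ) < (f m : ℝ) + 1 := by
    have : 1 ≤ f m := by omega
    exact_mod_cast by omega
  have hq : (0:ℝ) ≤ ((f m : ℝ) + 1)⁻¹ := by positivity
  have hq1 : ((f m : ℝ) + 1)⁻¹ < 1 := by
    rw [inv_lt_one_iff₀]; right; exact hF1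
  have hgeo : Summable (fun r : ℕ => ((f m : ℝ) * ((f m : ℝ) + 1)⁻¹) * (((f m : ℝ) + 1)⁻¹) ^ r) :=
    (summable_geometric_of_lt_one hq hq1).mul_left _
  apply Summable.of_nonneg_of_le (fun r => by positivity) _ hgeo
  intro r
  have hd : f (digitD m y (r + 1)) ≤ f m :=
    f_le_fm m f hf _ (by have := digitD_lt m y (r + 1); omega)
  have hpow : (0:ℝ) < ((f m : ℝ) + 1) ^ (r + 1) := by positivity
  rw [div_le_iff₀ hpow]
  have : ((f m : ℝ) * ((f m : ℝ) + 1)⁻¹) * (((f m : ℝ) + 1)⁻¹) ^ r * ((f m : ℝ) + 1) ^ (r + 1)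
      = (f m : ℝ) := by
    have hF0 : ((f m : ℝ) + 1) ≠ 0 := by positivity
    have hP0 : ((f m : ℝ) + 1) ^ r ≠ 0 := pow_ne_zero _ hF0
    rw [pow_succ, inv_pow]
    field_simp
  rw [this]
  exact_mod_cast hd

lemma rpow_alpha (m : ℕ) (hm : 1 ≤ m) (f : ℕ → ℕ) (hfm : m < f m) :
    ((m : ℝ) + 1) ^ (Real.log ((f m : ℝ) + 1) / Real.log ((m : ℝ) + 1)) = (f m : ℝ) + 1 := by
  have hb : (1:ℝ) < (m : ℝ) + 1 := by
    have : (1:ℝ) ≤ (m : ℝ) := by exact_mod_cast hm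
    linarith
  have hlb : Real.log ((m : ℝ) + 1) ≠ 0 := (Real.log_pos hb).ne'
  rw [Real.rpow_def_of_pos (by linarith)]
  rw [div_eq_inv_mul, ← mul_assoc, mul_inv_cancel₀ hlb, one_mul]
  exact Real.exp_log (by positivity)

theorem cantorLam_periodic_and_values (m : ℕ) (hm : 1 ≤ m) (f : ℕ → ℕ)
    (hf : ∀ i j, i < j → j ≤ m → f i < f j) (hf0 : f 0 = 0) (hfm : m < f m)
    (α : ℝ) (hα : α = Real.log (f m + 1) / Real.log (m + 1)) :
    (∀ x : ℝ, 0 < x → cantorLam m f α (((m : ℝ) + 1) * x) = cantorLam m f α x) ∧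
      (∀ n : ℕ, 1 ≤ n → cantorLam m f α (n : ℝ) = (cantorC m f n : ℝ) / (n : ℝ) ^ α) := by
  have hF0 : ((f m : ℝ) + 1) ≠ 0 := by positivity
  constructor
  · intro x hx
    unfold cantorLam
    have hfloor := floor_mul_toNat m x hx
    have hC : (cantorC m f (⌊((m : ℝ) + 1) * x⌋.toNat) : ℝ)
        = (f (digitD m (Int.fract x) 1) : ℝ)
          + ((f m : ℝ) + 1) * (cantorC m f ⌊x⌋.toNat : ℝ) := by
      rw [hfloor, cantorC_step m hm f hf0 _ _ (digitD_lt m _ 1)]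
      push_cast; ring
    set g : ℕ → ℝ :=
      fun r => (f (digitD m (Int.fract x) (r + 1)) : ℝ) / ((f m : ℝ) + 1) ^ (r + 1) with hg
    have hsum : Summable g := summable_digit m f hf hfm _
    have hS : (∑' r : ℕ,
          (f (digitD m (Int.fract (((m : ℝ) + 1) * x)) (r + 1)) : ℝ) / ((f m : ℝ) + 1) ^ (r + 1))
        = ∑' r : ℕ, g (r + 1) * ((f m : ℝ) + 1) := by
      apply tsum_congr; intro r
      rw [digitD_shift m x r, hg]
      simp only
      rw [pow_succ]
      field_simp
      ring
    have hz : (∑' r : ℕ, g (r + 1)) = (∑' r : ℕ, g r) - g 0 := by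
      rw [hsum.tsum_eq_zero_add]; ring
    have hg0 : g 0 * ((f m : ℝ) + 1) = (f (digitD m (Int.fract x) 1) : ℝ) := by
      rw [hg]; simp only [zero_add, pow_one]
      exact div_mul_cancel₀ _ hF0
    have hden : (((m : ℝ) + 1) * x) ^ α = ((f m : ℝ) + 1) * x ^ α := by
      rw [Real.mul_rpow (by positivity) hx.le, hα, rpow_alpha m hm f hfm]
    rw [hC, hS, tsum_mul_right, hz, hden]
    have hnum : (f (digitD m (Int.fract x) 1) : ℝ)
          + ((f m : ℝ) + 1) * (cantorC m f ⌊x⌋.toNat : ℝ)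
          + ((∑' r : ℕ, g r) - g 0) * ((f m : ℝ) + 1)
        = ((f m : ℝ) + 1) * ((cantorC m f ⌊x⌋.toNat : ℝ) + ∑' r : ℕ, g r) := by
      rw [sub_mul, hg0]; ring
    rw [show (f (digitD m (Int.fract x) 1) : ℝ)
          + ((f m : ℝ) + 1) * (cantorC m f ⌊x⌋.toNat : ℝ)
          + ((∑' r : ℕ, g r) - g 0) * ((f m : ℝ) + 1)
        = ((f m : ℝ) + 1) * ((cantorC m f ⌊x⌋.toNat : ℝ) + ∑' r : ℕ, g r) from hnum]
    exact mul_div_mul_left _ _ hF0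
  · intro n hn
    unfold cantorLam
    rw [Int.fract_natCast]
    have hd : ∀ r : ℕ, digitD m (0 : ℝ) (r + 1) = 0 := by
      intro r; unfold digitD; norm_num
    simp [hd, hf0, Int.floor_natCast, Int.toNat_natCast]
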